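/- Let γ ∈ ℝ and p_γ(ξ) = 4π²|ξ|² / (4π²|ξ|² + 2πi γ ξ₁) for ξ ∈ ℝ² \ {0}. Then ∂₂ p_γ(ξ) = 4πi γ ξ₁ ξ₂ / (2π|ξ|² + iγξ₁)², and for all ξ ∈ ℝ² \ {0} one has |ξ₂ ∂₂ p_γ(ξ)| ≤ 1. -/

import Mathlib

open Real Complex

/-- The anisotropic parameterization symbol
`p_γ(ξ) = 4π²|ξ|² / (4π²|ξ|² + 2πi γ ξ₁)` for `ξ = (ξ₁, ξ₂) ∈ ℝ²`. -/
noncomputable def pSymb (γ ξ₁ ξ₂ : ℝ) : ℂ :=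
  (4 * (Real.pi : ℂ) ^ 2 * ((ξ₁ : ℂ) ^ 2 + (ξ₂ : ℂ) ^ 2)) /
    (4 * (Real.pi : ℂ) ^ 2 * ((ξ₁ : ℂ) ^ 2 + (ξ₂ : ℂ) ^ 2) +
      2 * (Real.pi : ℂ) * Complex.I * (γ : ℂ) * (ξ₁ : ℂ))

/-- The claimed value of the partial derivative `∂₂ p_γ(ξ)`:
`4πi γ ξ₁ ξ₂ / (2π|ξ|² + iγξ₁)²`. -/
noncomputable def pSymbD2 (γ ξ₁ ξ₂ : ℝ) : ℂ :=
  (4 * (Real.pi : ℂ) * Complex.I * (γ : ℂ) * (ξ₁ : ℂ) * (ξ₂ : ℂ)) /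
    (2 * (Real.pi : ℂ) * ((ξ₁ : ℂ) ^ 2 + (ξ₂ : ℂ) ^ 2) + Complex.I * (γ : ℂ) * (ξ₁ : ℂ)) ^ 2

theorem hasDerivAt_pSymb_snd (γ ξ₁ ξ₂ : ℝ) (hξ : (ξ₁, ξ₂) ≠ (0, 0)) :
    HasDerivAt (fun t : ℝ => pSymb γ ξ₁ t) (pSymbD2 γ ξ₁ ξ₂) ξ₂ ∧
      ‖(ξ₂ : ℂ) * pSymbD2 γ ξ₁ ξ₂‖ ≤ 1 := by
  have hne : ξ₁ ≠ 0 ∨ ξ₂ ≠ 0 := by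
    by_contra h
    push_neg at h
    exact hξ (by simp [h.1, h.2])
  have hS : (0:ℝ) < ξ₁ ^ 2 + ξ₂ ^ 2 := by
    rcases hne with h | h <;> positivity
  have hπ : (Real.pi : ℂ) ≠ 0 := Complex.ofReal_ne_zero.mpr Real.pi_ne_zero
  -- z = 2π|ξ|² + iγξ₁ ≠ 0
  set z : ℂ := 2 * (Real.pi : ℂ) * ((ξ₁ : ℂ) ^ 2 + (ξ₂ : ℂ) ^ 2) + Complex.I * (γ : ℂ) * (ξ₁ : ℂ)
    with hzdef
  have hz : z ≠ 0 := by
    intro h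
    have h' := congrArg Complex.re h
    simp [hzdef] at h'
    simp only [← Complex.ofReal_pow, Complex.ofReal_re] at h'
    exact hS.ne' h'
  have hD : (4 * (Real.pi : ℂ) ^ 2 * ((ξ₁ : ℂ) ^ 2 + (ξ₂ : ℂ) ^ 2) +
      2 * (Real.pi : ℂ) * Complex.I * (γ : ℂ) * (ξ₁ : ℂ)) ≠ 0 := by
    have : (4 * (Real.pi : ℂ) ^ 2 * ((ξ₁ : ℂ) ^ 2 + (ξ₂ : ℂ) ^ 2) +
        2 * (Real.pi : ℂ) * Complex.I * (γ : ℂ) * (ξ₁ : ℂ)) = 2 * (Real.pi : ℂ) * z := by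
      rw [hzdef]; ring
    rw [this]
    exact mul_ne_zero (by simp [hπ]) hz
  constructor
  · -- derivative
    have hnum : HasDerivAt (fun w : ℂ => 4 * (Real.pi : ℂ) ^ 2 * ((ξ₁ : ℂ) ^ 2 + w ^ 2))
        (4 * (Real.pi : ℂ) ^ 2 * (2 * (ξ₂:ℂ))) (ξ₂:ℂ) := by
      simpa using (((hasDerivAt_pow 2 ((ξ₂:ℂ))).const_add ((ξ₁:ℂ) ^ 2)).const_mul
        (4 * (Real.pi : ℂ) ^ 2))
    have hden : HasDerivAt (fun w : ℂ => 4 * (Real.pi : ℂ) ^ 2 * ((ξ₁ : ℂ) ^ 2 + w ^ 2) +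
        2 * (Real.pi : ℂ) * Complex.I * (γ : ℂ) * (ξ₁ : ℂ))
        (4 * (Real.pi : ℂ) ^ 2 * (2 * (ξ₂:ℂ))) (ξ₂:ℂ) :=
      hnum.add_const _
    have hdiv := (hnum.div hden hD).comp_ofReal
    have heq : (fun t : ℝ => pSymb γ ξ₁ t) =
        (fun t : ℝ => (fun w : ℂ => 4 * (Real.pi : ℂ) ^ 2 * ((ξ₁ : ℂ) ^ 2 + w ^ 2) /
          (4 * (Real.pi : ℂ) ^ 2 * ((ξ₁ : ℂ) ^ 2 + w ^ 2) +
            2 * (Real.pi : ℂ) * Complex.I * (γ : ℂ) * (ξ₁ : ℂ))) (t : ℂ)) := rfl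
    rw [heq]
    convert hdiv using 1
    · rfl
    rw [pSymbD2, ← hzdef]
    have hz2 : z ^ 2 ≠ 0 := pow_ne_zero _ hz
    rw [div_eq_div_iff hz2 (pow_ne_zero _ hD)]
    rw [hzdef]
    ring
  · -- bound
    have habs : (ξ₂ : ℂ) * pSymbD2 γ ξ₁ ξ₂ =
        (4 * (Real.pi : ℂ) * Complex.I * (γ : ℂ) * (ξ₁ : ℂ) * (ξ₂ : ℂ) ^ 2) / z ^ 2 := by
      rw [pSymbD2, ← hzdef]
      field_simp
    rw [habs, norm_div, norm_pow]
    have hzabs : ‖z‖ ^ 2 = (2 * Real.pi * (ξ₁ ^ 2 + ξ₂ ^ 2)) ^ 2 + (γ * ξ₁) ^ 2 := by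
      have : z = ((2 * Real.pi * (ξ₁ ^ 2 + ξ₂ ^ 2) : ℝ) : ℂ) + ((γ * ξ₁ : ℝ) : ℂ) * Complex.I := by
        rw [hzdef]; push_cast; ring
      rw [this, Complex.sq_norm, Complex.normSq_add_mul_I]
    have hnumabs : ‖(4 * (Real.pi : ℂ) * Complex.I * (γ : ℂ) * (ξ₁ : ℂ) * (ξ₂ : ℂ) ^ 2)‖
        = 4 * Real.pi * |γ * ξ₁| * ξ₂ ^ 2 := by
      rw [show (4 * (Real.pi : ℂ) * Complex.I * (γ : ℂ) * (ξ₁ : ℂ) * (ξ₂ : ℂ) ^ 2)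
          = ((4 * Real.pi : ℝ) : ℂ) * Complex.I * ((γ * ξ₁ : ℝ) : ℂ) * (((ξ₂ ^ 2 : ℝ)) : ℂ) by
        push_cast; ring]
      simp [norm_mul, Complex.norm_real, abs_mul,
        abs_of_pos Real.pi_pos, _root_.abs_of_nonneg (sq_nonneg ξ₂)]
    rw [hnumabs, hzabs]
    rw [div_le_one (by positivity)]
    have h1 : ξ₂ ^ 2 ≤ ξ₁ ^ 2 + ξ₂ ^ 2 := by nlinarith
    have h2 : 2 * (2 * Real.pi * (ξ₁ ^ 2 + ξ₂ ^ 2)) * |γ * ξ₁| ≤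
        (2 * Real.pi * (ξ₁ ^ 2 + ξ₂ ^ 2)) ^ 2 + |γ * ξ₁| ^ 2 := two_mul_le_add_sq _ _
    have h3 : |γ * ξ₁| ^ 2 = (γ * ξ₁) ^ 2 := _root_.sq_abs _
    nlinarith [abs_nonneg (γ * ξ₁), Real.pi_pos]
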